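/- Let a₁, a₂, a₃ ∈ ℂ and define U(t) = −2(1/(t−a₁) + 1/(t−a₂) + 1/(t−a₃)) for t ∈ ℂ \ {a₁, a₂, a₃}. Then U satisfies the third-order differential equation U''' − 2UU'' + 3(U')² − (1/8)(6U' − U²)² = 0 at every point of ℂ \ {a₁, a₂, a₃}. -/

import Mathlib

/-- `U(t) = −2(1/(t−a₁) + 1/(t−a₂) + 1/(t−a₃))`. -/
noncomputable def Usol (a1 a2 a3 : ℂ) : ℂ → ℂ :=
  fun t => -2 * ((t - a1)⁻¹ + (t - a2)⁻¹ + (t - a3)⁻¹)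

noncomputable def U1aux (a1 a2 a3 : ℂ) : ℂ → ℂ :=
  fun t => 2 * (((t - a1)⁻¹) ^ 2 + ((t - a2)⁻¹) ^ 2 + ((t - a3)⁻¹) ^ 2)

noncomputable def U2aux (a1 a2 a3 : ℂ) : ℂ → ℂ :=
  fun t => -4 * (((t - a1)⁻¹) ^ 3 + ((t - a2)⁻¹) ^ 3 + ((t - a3)⁻¹) ^ 3)

noncomputable def U3aux (a1 a2 a3 : ℂ) : ℂ → ℂ :=
  fun t => 12 * (((t - a1)⁻¹) ^ 4 + ((t - a2)⁻¹) ^ 4 + ((t - a3)⁻¹) ^ 4)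

lemma hd1 (a t : ℂ) (h : t ≠ a) :
    HasDerivAt (fun s => (s - a)⁻¹) (-((t - a)⁻¹) ^ 2) t := by
  have h0 : t - a ≠ 0 := sub_ne_zero.mpr h
  have := ((hasDerivAt_id t).sub_const a).inv h0
  refine this.congr_deriv ?_
  simp only [id]
  field_simp

lemma hd2 (a t : ℂ) (h : t ≠ a) :
    HasDerivAt (fun s => ((s - a)⁻¹) ^ 2) (-2 * ((t - a)⁻¹) ^ 3) t := by
  have := (hd1 a t h).pow 2
  refine this.congr_deriv ?_
  ring

lemma hd3 (a t : ℂ) (h : t ≠ a) :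
    HasDerivAt (fun s => ((s - a)⁻¹) ^ 3) (-3 * ((t - a)⁻¹) ^ 4) t := by
  have := (hd1 a t h).pow 3
  refine this.congr_deriv ?_
  ring

lemma hdU0 (a1 a2 a3 t : ℂ) (h1 : t ≠ a1) (h2 : t ≠ a2) (h3 : t ≠ a3) :
    HasDerivAt (Usol a1 a2 a3) (U1aux a1 a2 a3 t) t := by
  have := (((hd1 a1 t h1).add (hd1 a2 t h2)).add (hd1 a3 t h3)).const_mul (-2 : ℂ)
  refine this.congr_deriv ?_
  simp [U1aux]; ring

lemma hdU1 (a1 a2 a3 t : ℂ) (h1 : t ≠ a1) (h2 : t ≠ a2) (h3 : t ≠ a3) :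
    HasDerivAt (U1aux a1 a2 a3) (U2aux a1 a2 a3 t) t := by
  have := (((hd2 a1 t h1).add (hd2 a2 t h2)).add (hd2 a3 t h3)).const_mul (2 : ℂ)
  refine this.congr_deriv ?_
  simp [U2aux]; ring

lemma hdU2 (a1 a2 a3 t : ℂ) (h1 : t ≠ a1) (h2 : t ≠ a2) (h3 : t ≠ a3) :
    HasDerivAt (U2aux a1 a2 a3) (U3aux a1 a2 a3 t) t := by
  have := (((hd3 a1 t h1).add (hd3 a2 t h2)).add (hd3 a3 t h3)).const_mul (-4 : ℂ)
  refine this.congr_deriv ?_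
  simp [U3aux]; ring

/-- The function `U(t) = −2(1/(t−a₁) + 1/(t−a₂) + 1/(t−a₃))` satisfies
`U''' − 2UU'' + 3(U')² − (1/8)(6U' − U²)² = 0` on `ℂ \ {a₁, a₂, a₃}`. -/
theorem Usol_satisfies_third_order_equation (a1 a2 a3 : ℂ) :
    ∀ t : ℂ, t ≠ a1 → t ≠ a2 → t ≠ a3 →
      iteratedDeriv 3 (Usol a1 a2 a3) t
        - 2 * Usol a1 a2 a3 t * iteratedDeriv 2 (Usol a1 a2 a3) t
        + 3 * (deriv (Usol a1 a2 a3) t) ^ 2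
        - 1 / 8 * (6 * deriv (Usol a1 a2 a3) t - (Usol a1 a2 a3 t) ^ 2) ^ 2 = 0 := by
  intro t h1 h2 h3
  have hS : IsOpen {s : ℂ | s ≠ a1 ∧ s ≠ a2 ∧ s ≠ a3} :=
    (isOpen_ne.inter (isOpen_ne.inter isOpen_ne)).mono (by intro x hx; exact hx)
  have htS : t ∈ {s : ℂ | s ≠ a1 ∧ s ≠ a2 ∧ s ≠ a3} := ⟨h1, h2, h3⟩
  have hnhds : {s : ℂ | s ≠ a1 ∧ s ≠ a2 ∧ s ≠ a3} ∈ nhds t := hS.mem_nhds htS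
  -- deriv Usol = U1aux on the open set
  have hD1 : deriv (Usol a1 a2 a3) =ᶠ[nhds t] U1aux a1 a2 a3 := by
    filter_upwards [hnhds] with s hs
    exact (hdU0 a1 a2 a3 s hs.1 hs.2.1 hs.2.2).deriv
  have hD2 : deriv (deriv (Usol a1 a2 a3)) =ᶠ[nhds t] U2aux a1 a2 a3 := by
    filter_upwards [hS.eventually_mem htS] with s hs
    have hnh : {u : ℂ | u ≠ a1 ∧ u ≠ a2 ∧ u ≠ a3} ∈ nhds s := hS.mem_nhds hs
    have h' : deriv (Usol a1 a2 a3) =ᶠ[nhds s] U1aux a1 a2 a3 := by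
      filter_upwards [hnh] with u hu
      exact (hdU0 a1 a2 a3 u hu.1 hu.2.1 hu.2.2).deriv
    rw [h'.deriv_eq]
    exact (hdU1 a1 a2 a3 s hs.1 hs.2.1 hs.2.2).deriv
  have hD3 : deriv (deriv (deriv (Usol a1 a2 a3))) t = U3aux a1 a2 a3 t := by
    rw [hD2.deriv_eq]
    exact (hdU2 a1 a2 a3 t h1 h2 h3).deriv
  have e1 : deriv (Usol a1 a2 a3) t = U1aux a1 a2 a3 t := hD1.self_of_nhds
  have e2 : iteratedDeriv 2 (Usol a1 a2 a3) t = U2aux a1 a2 a3 t := by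
    rw [iteratedDeriv_succ, iteratedDeriv_one]
    exact hD2.self_of_nhds
  have e3 : iteratedDeriv 3 (Usol a1 a2 a3) t = U3aux a1 a2 a3 t := by
    rw [iteratedDeriv_succ, iteratedDeriv_succ, iteratedDeriv_one]
    exact hD3
  rw [e1, e2, e3]
  simp only [Usol, U1aux, U2aux, U3aux]
  ring
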